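/- For cosets x, y ∈ S_N/(S_K × S_{N−K}) with associated lattice paths α, β (under the standard bijection with the ε = − convention), x ≤ y in the induced Bruhat order if and only if the path α lies weakly below the path β; moreover the length |x| of the coset equals the number of unit boxes between α and the minimal path. -/

import Mathlib

/-- The adjacent transposition swapping positions `j` and `j+1` (0-indexed) in `S_N`. -/
def sgen (N : ℕ) (j : ℕ) (h : j + 1 < N) : Equiv.Perm (Fin N) :=
  Equiv.swap ⟨j, Nat.lt_of_succ_lt h⟩ ⟨j + 1, h⟩

/-- The Young subgroup `S_K × S_{N-K}` of `S_N`. -/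
def young (N K : ℕ) : Subgroup (Equiv.Perm (Fin N)) :=
  Subgroup.closure {σ | ∃ (j : ℕ) (h : j + 1 < N), j + 1 ≠ K ∧ σ = sgen N j h}

/-- The length (number of inversions) of a permutation. -/
def len {N : ℕ} (σ : Equiv.Perm (Fin N)) : ℕ :=
  (Finset.univ.filter (fun p : Fin N × Fin N => p.1 < p.2 ∧ σ p.2 < σ p.1)).card

/-- Bruhat covering (as in the paper): multiply on the left or right by a simple
transposition, increasing length by one. -/
def bcov (N : ℕ) (v w : Equiv.Perm (Fin N)) : Prop :=
  (∃ (j : ℕ) (h : j + 1 < N), w = sgen N j h * v ∨ w = v * sgen N j h) ∧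
    len w = len v + 1

/-- Bruhat order on `S_N`. -/
def bruhatLE (N : ℕ) : Equiv.Perm (Fin N) → Equiv.Perm (Fin N) → Prop :=
  Relation.ReflTransGen (bcov N)

/-- The induced order on cosets: `x ≤ y` iff some representatives are comparable. -/
def cosetLE (N K : ℕ) (x y : Equiv.Perm (Fin N) ⧸ young N K) : Prop :=
  ∃ v w : Equiv.Perm (Fin N),
    (QuotientGroup.mk v : Equiv.Perm (Fin N) ⧸ young N K) = x ∧
    (QuotientGroup.mk w : Equiv.Perm (Fin N) ⧸ young N K) = y ∧ bruhatLE N v w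

/-- The length of a coset: minimal length of a representative. -/
noncomputable def clen (N K : ℕ) (x : Equiv.Perm (Fin N) ⧸ young N K) : ℕ :=
  sInf {n | ∃ v : Equiv.Perm (Fin N),
    (QuotientGroup.mk v : Equiv.Perm (Fin N) ⧸ young N K) = x ∧ len v = n}

/-- The base binary string `(1,…,1,2,…,2)` (`true` = 1, `false` = 2). -/
def base (N K : ℕ) : Fin N → Bool := fun i => decide ((i : ℕ) < K)

/-- Height at abscissa `x` of the lattice path of a binary string, in the ε = −
convention: entries `1` (`true`) give steps `(1,-1)` and entries `2` (`false`) give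
steps `(1,+1)`. -/
def hgtm {N : ℕ} (v : Fin N → Bool) (x : ℤ) : ℤ :=
  ∑ i ∈ Finset.univ.filter (fun i : Fin N => (i : ℤ) < x),
    (if v i then (-1 : ℤ) else 1)

theorem Equiv.Perm.apply_inv_self {α : Type*} (f : Equiv.Perm α) (x : α) : f (f⁻¹ x) = x :=
  Equiv.apply_symm_apply f x

theorem Equiv.Perm.inv_apply_self {α : Type*} (f : Equiv.Perm α) (x : α) : f⁻¹ (f x) = x :=
  Equiv.symm_apply_apply f x

namespace Stmt5

open Finset Equiv

variable {N K : ℕ}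

def pa (j : ℕ) (h : j + 1 < N) : Fin N := ⟨j, Nat.lt_of_succ_lt h⟩
def pb (j : ℕ) (h : j + 1 < N) : Fin N := ⟨j + 1, h⟩

lemma sgen_eq (j : ℕ) (h : j + 1 < N) : sgen N j h = Equiv.swap (pa j h) (pb j h) := rfl

lemma sgen_pa (j : ℕ) (h : j + 1 < N) : sgen N j h (pa j h) = pb j h := by
  rw [sgen_eq]; exact Equiv.swap_apply_left _ _

lemma sgen_pb (j : ℕ) (h : j + 1 < N) : sgen N j h (pb j h) = pa j h := by
  rw [sgen_eq]; exact Equiv.swap_apply_right _ _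

lemma sgen_sq (j : ℕ) (h : j + 1 < N) : sgen N j h * sgen N j h = 1 := by
  rw [sgen_eq]; exact Equiv.swap_mul_self _ _

lemma sgen_inv (j : ℕ) (h : j + 1 < N) : (sgen N j h)⁻¹ = sgen N j h := by
  rw [sgen_eq]; exact Equiv.swap_inv _ _

lemma sgen_lt {j : ℕ} (h : j + 1 < N) {a b : Fin N} (hab : a < b)
    (hne : ¬((a : ℕ) = j ∧ (b : ℕ) = j + 1)) :
    sgen N j h a < sgen N j h b := by
  rw [sgen_eq]
  rcases a with ⟨va, hva⟩; rcases b with ⟨vb, hvb⟩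
  simp only [Equiv.swap_apply_def, pa, pb, Fin.mk.injEq, Fin.mk_lt_mk, Fin.lt_def] at *
  split_ifs <;> simp_all <;> omega

lemma card_swap_succ {j : ℕ} (h : j + 1 < N) (A A' : Finset (Fin N × Fin N))
    (hA : ∀ p ∈ A, p.1 < p.2) (hA' : ∀ p ∈ A', p.1 < p.2)
    (hiff : ∀ p : Fin N × Fin N, p.1 < p.2 → ¬((p.1 : ℕ) = j ∧ (p.2 : ℕ) = j + 1) →
      (p ∈ A' ↔ (sgen N j h p.1, sgen N j h p.2) ∈ A))
    (hq' : (pa j h, pb j h) ∈ A') (hq : (pa j h, pb j h) ∉ A) :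
    A'.card = A.card + 1 := by
  rw [← Finset.card_erase_add_one hq']
  congr 1
  apply Finset.card_nbij' (i := fun p => (sgen N j h p.1, sgen N j h p.2))
    (j := fun p => (sgen N j h p.1, sgen N j h p.2))
  · intro p hp
    have hmem := Finset.mem_of_mem_erase hp
    have hne := Finset.ne_of_mem_erase hp
    have hord := hA' p hmem
    have hne' : ¬((p.1 : ℕ) = j ∧ (p.2 : ℕ) = j + 1) := by
      intro hc
      apply hne
      have : p.1 = pa j h := Fin.ext hc.1
      have h2 : p.2 = pb j h := Fin.ext hc.2
      rw [Prod.ext_iff]; exact ⟨this, h2⟩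
    exact (hiff p hord hne').mp hmem
  · intro p hp
    have hord : p.1 < p.2 := hA p hp
    have hne : ¬((p.1 : ℕ) = j ∧ (p.2 : ℕ) = j + 1) := by
      intro hc
      apply hq
      have h1 : p.1 = pa j h := Fin.ext hc.1
      have h2 : p.2 = pb j h := Fin.ext hc.2
      rwa [← h1, ← h2, Prod.mk.eta]
    have hord' : sgen N j h p.1 < sgen N j h p.2 := sgen_lt h hord hne
    have hne' : ¬((sgen N j h p.1 : ℕ) = j ∧ (sgen N j h p.2 : ℕ) = j + 1) := by
      intro hc
      have h1 : sgen N j h p.1 = pa j h := Fin.ext hc.1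
      have h2 : sgen N j h p.2 = pb j h := Fin.ext hc.2
      have e1 : p.1 = pb j h := by
        have := congrArg (sgen N j h) h1
        rwa [← Equiv.Perm.mul_apply, sgen_sq, Equiv.Perm.one_apply, sgen_pa] at this
      have e2 : p.2 = pa j h := by
        have := congrArg (sgen N j h) h2
        rwa [← Equiv.Perm.mul_apply, sgen_sq, Equiv.Perm.one_apply, sgen_pb] at this
      rw [e1, e2] at hord
      exact absurd hord (by simp [pa, pb, Fin.lt_def])
    have hmem : (sgen N j h p.1, sgen N j h p.2) ∈ A' := by
      rw [hiff _ hord' hne']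
      simpa [Prod.ext_iff, ← Equiv.Perm.mul_apply, sgen_sq] using hp
    refine Finset.mem_erase.mpr ⟨?_, hmem⟩
    intro hc
    rw [Prod.ext_iff] at hc
    exact hne' ⟨congrArg Fin.val hc.1, congrArg Fin.val hc.2⟩
  · intro p hp
    simp [Prod.ext_iff, ← Equiv.Perm.mul_apply, sgen_sq]
  · intro p hp
    simp [Prod.ext_iff, ← Equiv.Perm.mul_apply, sgen_sq]


lemma pa_lt_pb (j : ℕ) (h : j + 1 < N) : pa j h < pb j h := by
  simp [pa, pb, Fin.lt_def]

lemma len_inv (σ : Equiv.Perm (Fin N)) : len σ⁻¹ = len σ := by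
  unfold len
  apply Finset.card_nbij' (i := fun p => (σ⁻¹ p.2, σ⁻¹ p.1)) (j := fun p => (σ p.2, σ p.1)) <;>
    intro p hp <;>
    simp only [Finset.mem_coe, Finset.mem_filter, Finset.mem_univ, true_and, Equiv.Perm.apply_inv_self,
      Equiv.Perm.inv_apply_self, Prod.mk.eta] at * <;>
    tauto

lemma len_mul_sgen_of_lt {σ : Equiv.Perm (Fin N)} {j : ℕ} (h : j + 1 < N)
    (hlt : σ (pa j h) < σ (pb j h)) :
    len (σ * sgen N j h) = len σ + 1 := by
  unfold len
  apply card_swap_succ h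
  · intro p hp; exact (Finset.mem_filter.mp hp).2.1
  · intro p hp; exact (Finset.mem_filter.mp hp).2.1
  · intro p hord hne
    rw [Finset.mem_filter, Finset.mem_filter]
    simp only [Finset.mem_filter, Finset.mem_univ, true_and, Equiv.Perm.mul_apply]
    exact ⟨fun hc => ⟨sgen_lt h hord hne, hc.2⟩, fun hc => ⟨hord, hc.2⟩⟩
  · rw [Finset.mem_filter]
    simp only [Finset.mem_filter, Finset.mem_univ, true_and, Equiv.Perm.mul_apply,
      sgen_pa, sgen_pb]
    exact ⟨pa_lt_pb j h, hlt⟩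
  · simp only [Finset.mem_filter, Finset.mem_univ, true_and, not_and]
    intro _
    exact not_lt_of_gt hlt

lemma len_of_sgen_lt {σ : Equiv.Perm (Fin N)} {j : ℕ} (h : j + 1 < N)
    (hlt : σ (pb j h) < σ (pa j h)) :
    len σ = len (σ * sgen N j h) + 1 := by
  have h2 : (σ * sgen N j h) (pa j h) < (σ * sgen N j h) (pb j h) := by
    simpa [Equiv.Perm.mul_apply, sgen_pa, sgen_pb] using hlt
  have := len_mul_sgen_of_lt h h2
  rwa [mul_assoc, sgen_sq, mul_one] at this

lemma len_sgen_mul_of_lt {σ : Equiv.Perm (Fin N)} {j : ℕ} (h : j + 1 < N)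
    (hlt : σ⁻¹ (pa j h) < σ⁻¹ (pb j h)) :
    len (sgen N j h * σ) = len σ + 1 := by
  rw [← len_inv (sgen N j h * σ), mul_inv_rev, sgen_inv, ← len_inv σ]
  exact len_mul_sgen_of_lt h hlt

lemma len_of_sgen_mul_lt {σ : Equiv.Perm (Fin N)} {j : ℕ} (h : j + 1 < N)
    (hlt : σ⁻¹ (pb j h) < σ⁻¹ (pa j h)) :
    len σ = len (sgen N j h * σ) + 1 := by
  rw [← len_inv (sgen N j h * σ), mul_inv_rev, sgen_inv, ← len_inv σ]
  exact len_of_sgen_lt h hlt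

lemma len_one : len (1 : Equiv.Perm (Fin N)) = 0 := by
  unfold len
  rw [Finset.card_eq_zero, Finset.filter_eq_empty_iff]
  intro p _
  simp only [Equiv.Perm.one_apply, not_and]
  intro h
  exact not_lt_of_gt h

def Pres (K : ℕ) {N : ℕ} (h : Equiv.Perm (Fin N)) : Prop :=
  ∀ i : Fin N, ((h i : Fin N) : ℕ) < K ↔ (i : ℕ) < K

lemma sgen_pres {j : ℕ} (hj : j + 1 < N) (hne : j + 1 ≠ K) (i : Fin N) :
    ((sgen N j hj i : Fin N) : ℕ) < K ↔ (i : ℕ) < K := by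
  rw [sgen_eq]
  rcases i with ⟨vi, hvi⟩
  simp only [Equiv.swap_apply_def, pa, pb, Fin.mk.injEq]
  split_ifs <;> simp_all <;> omega

def presSub (N K : ℕ) : Subgroup (Equiv.Perm (Fin N)) where
  carrier := {h | Pres K h}
  mul_mem' := by
    intro a b ha hb i
    rw [Equiv.Perm.mul_apply]
    exact (ha (b i)).trans (hb i)
  one_mem' := fun i => Iff.rfl
  inv_mem' := by
    intro a ha i
    have := ha (a⁻¹ i)
    rw [Equiv.Perm.apply_inv_self] at this
    exact this.symm

lemma eq_one_of_len_zero {h : Equiv.Perm (Fin N)} (h0 : len h = 0) : h = 1 := by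
  have hmono : StrictMono h := by
    intro a b hab
    have h0' : (Finset.univ.filter (fun p : Fin N × Fin N => p.1 < p.2 ∧ h p.2 < h p.1)).card = 0 := h0
    have := Finset.filter_eq_empty_iff.mp (Finset.card_eq_zero.mp h0') (Finset.mem_univ (a, b))
    simp only [not_and] at this
    rcases lt_or_ge (h b) (h a) with hc | hc
    · exact absurd hc (this hab)
    · exact lt_of_le_of_ne hc (fun he => absurd (h.injective he).symm (ne_of_gt hab))
  have he : StrictMono.orderIsoOfSurjective (↑h) hmono h.surjective =
      OrderIso.refl (Fin N) := Subsingleton.elim _ _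
  ext i
  have := congrArg (fun f : Fin N ≃o Fin N => f i) he
  simp only [OrderIso.refl_apply] at this
  rw [show ((StrictMono.orderIsoOfSurjective (↑h) hmono h.surjective) i) = h i from
    congrFun (StrictMono.coe_orderIsoOfSurjective _ _ _) i] at this
  simp [this]

lemma exists_descent {h : Equiv.Perm (Fin N)} (hne : h ≠ 1) :
    ∃ (j : ℕ) (hj : j + 1 < N), h (pb j hj) < h (pa j hj) := by
  by_contra hc
  push_neg at hc
  apply hne
  rcases Nat.eq_zero_or_pos N with h0 | hpos
  · ext i; exact absurd i.isLt (by omega)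
  obtain ⟨m, rfl⟩ : ∃ m, N = m + 1 := ⟨N - 1, by omega⟩
  have hmono : StrictMono h := by
    rw [Fin.strictMono_iff_lt_succ]
    intro i
    have hj : (i : ℕ) + 1 < m + 1 := by omega
    have hle := hc i hj
    have hlt : h (pa i hj) ≠ h (pb i hj) := by
      intro he
      have := h.injective he
      simp [pa, pb, Fin.ext_iff] at this
    have h1 : Fin.castSucc i = pa i hj := by simp [pa, Fin.ext_iff]
    have h2 : Fin.succ i = pb i hj := by simp [pb, Fin.ext_iff]
    rw [h1, h2]
    exact lt_of_le_of_ne hle hlt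
  exact eq_one_of_len_zero (by
    unfold len
    rw [Finset.card_eq_zero, Finset.filter_eq_empty_iff]
    intro p _
    simp only [not_and, not_lt]
    intro hp
    exact le_of_lt (hmono hp))

lemma mem_young_of_pres : ∀ (n : ℕ) (h : Equiv.Perm (Fin N)), len h = n → Pres K h →
    h ∈ young N K := by
  intro n
  induction n using Nat.strong_induction_on with
  | _ n ih =>
    intro h hlen hp
    by_cases h1 : h = 1
    · rw [h1]; exact one_mem _
    obtain ⟨j, hj, hdesc⟩ := exists_descent h1
    have hjK : j + 1 ≠ K := by
      intro hc
      have h1' := hp (pa j hj)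
      have h2' := hp (pb j hj)
      rw [Fin.lt_def] at hdesc
      simp only [pa, pb] at h1' h2' hdesc
      omega
    have hlen' : len h = len (h * sgen N j hj) + 1 := len_of_sgen_lt hj hdesc
    have hp' : Pres K (h * sgen N j hj) := by
      intro i
      rw [Equiv.Perm.mul_apply]
      exact (hp (sgen N j hj i)).trans (sgen_pres hj hjK i)
    have hmem : h * sgen N j hj ∈ young N K :=
      ih (len (h * sgen N j hj)) (by omega) _ rfl hp'
    have heq : h = (h * sgen N j hj) * sgen N j hj := by
      rw [mul_assoc, sgen_sq, mul_one]
    rw [heq]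
    exact mul_mem hmem (Subgroup.subset_closure ⟨j, hj, hjK, rfl⟩)

lemma young_mem_iff (h : Equiv.Perm (Fin N)) : h ∈ young N K ↔ Pres K h := by
  constructor
  · intro hm
    have : young N K ≤ presSub N K := by
      rw [young, Subgroup.closure_le]
      rintro σ ⟨j, hj, hne, rfl⟩
      exact fun i => sgen_pres hj hne i
    exact this hm
  · exact mem_young_of_pres (len h) h rfl

lemma claimA (v w : Equiv.Perm (Fin N)) :
    (QuotientGroup.mk v : Equiv.Perm (Fin N) ⧸ young N K) = QuotientGroup.mk w ↔
      ∀ i : Fin N, ((v⁻¹ i : Fin N) : ℕ) < K ↔ ((w⁻¹ i : Fin N) : ℕ) < K := by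
  rw [QuotientGroup.eq, young_mem_iff]
  constructor
  · intro hp i
    have := hp (w⁻¹ i)
    rw [Equiv.Perm.mul_apply, Equiv.Perm.apply_inv_self] at this
    exact this.trans (by
      have := hp (w⁻¹ i)
      exact Iff.rfl)
  · intro ht i
    rw [Equiv.Perm.mul_apply]
    exact (ht (w i)).symm.symm.trans (by rw [Equiv.Perm.inv_apply_self])

open Finset

def fT (T : Finset (Fin N)) (n : ℕ) : ℕ := (T.filter (fun i : Fin N => (i : ℕ) < n)).card

lemma fT_eq_sum (T : Finset (Fin N)) (n : ℕ) :
    fT T n = ∑ i : Fin N, if i ∈ T ∧ (i : ℕ) < n then 1 else 0 := by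
  unfold fT
  rw [show T.filter (fun i : Fin N => (i : ℕ) < n) = univ.filter (fun i : Fin N => i ∈ T ∧ (i : ℕ) < n) by
    ext i; simp]
  rw [Finset.card_filter]

lemma fT_mono (T : Finset (Fin N)) {n m : ℕ} (h : n ≤ m) : fT T n ≤ fT T m :=
  Finset.card_le_card (Finset.monotone_filter_right T (fun i _ hi => lt_of_lt_of_le hi h))

lemma fT_le_card (T : Finset (Fin N)) (n : ℕ) : fT T n ≤ T.card :=
  Finset.card_le_card (Finset.filter_subset _ _)

lemma fT_le_n (T : Finset (Fin N)) (n : ℕ) : fT T n ≤ n := by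
  unfold fT
  calc (T.filter (fun i : Fin N => (i : ℕ) < n)).card
      ≤ (Finset.range n).card := Finset.card_le_card_of_injOn (fun i => (i : ℕ))
        (by intro i hi; simp_all) (fun i _ j _ h => Fin.val_injective h)
    _ = n := Finset.card_range n

lemma fT_all (T : Finset (Fin N)) {n : ℕ} (hn : N ≤ n) : fT T n = T.card := by
  unfold fT
  rw [Finset.filter_true_of_mem]
  intro i _
  exact lt_of_lt_of_le i.isLt hn

lemma fT_zero (T : Finset (Fin N)) : fT T 0 = 0 := by
  simp [fT]

lemma sum_single_if (c : Fin N) (n : ℕ) :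
    (∑ i : Fin N, if i = c ∧ (i : ℕ) < n then 1 else 0) = (if (c : ℕ) < n then 1 else 0) := by
  rw [Finset.sum_eq_single c]
  · simp
  · intro i _ hne
    simp [hne]
  · intro h
    exact absurd (Finset.mem_univ c) h

lemma fT_succ (T : Finset (Fin N)) {n : ℕ} (hn : n < N) :
    fT T (n + 1) = fT T n + (if (⟨n, hn⟩ : Fin N) ∈ T then 1 else 0) := by
  rw [fT_eq_sum, fT_eq_sum]
  have key : ∀ i : Fin N, (if i ∈ T ∧ (i : ℕ) < n + 1 then 1 else 0) =
      (if i ∈ T ∧ (i : ℕ) < n then 1 else 0) + (if i = ⟨n, hn⟩ ∧ i ∈ T then 1 else 0) := by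
    intro i
    by_cases hi : i = ⟨n, hn⟩
    · subst hi
      by_cases hT : (⟨n, hn⟩ : Fin N) ∈ T <;> simp [hT]
    · have hv : ¬((i : ℕ) = n) := fun h => hi (Fin.ext h)
      by_cases hT : i ∈ T <;> simp [hi, hT] <;> split_ifs <;> omega
  rw [Finset.sum_congr rfl (fun i _ => key i), Finset.sum_add_distrib]
  congr 1
  rw [Finset.sum_eq_single ⟨n, hn⟩]
  · simp
  · intro i _ hne; simp [hne]
  · intro h; exact absurd (Finset.mem_univ _) h

lemma fT_update {T : Finset (Fin N)} {a b : Fin N} (ha : a ∈ T) (hb : b ∉ T) (n : ℕ) :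
    fT (insert b (T.erase a)) n + (if (a : ℕ) < n then 1 else 0) =
      fT T n + (if (b : ℕ) < n then 1 else 0) := by
  have hab : a ≠ b := fun h => hb (h ▸ ha)
  rw [fT_eq_sum, fT_eq_sum, ← sum_single_if a n, ← sum_single_if b n,
    ← Finset.sum_add_distrib, ← Finset.sum_add_distrib]
  apply Finset.sum_congr rfl
  intro i _
  by_cases h1 : i = a <;> by_cases h2 : i = b <;>
    simp_all [Finset.mem_insert, Finset.mem_erase] <;> split_ifs <;> simp_all

def Bset (N K : ℕ) : Finset (Fin N) := univ.filter (fun i => (i : ℕ) < K)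

lemma mem_Bset (i : Fin N) : i ∈ Bset N K ↔ (i : ℕ) < K := by simp [Bset]

lemma card_Bset (hK : K ≤ N) : (Bset N K).card = K := by
  rw [show Bset N K = (Finset.range K).attachFin
      (fun m hm => lt_of_lt_of_le (Finset.mem_range.mp hm) hK) by
    ext i; simp [Bset, Finset.mem_attachFin]]
  rw [Finset.card_attachFin, Finset.card_range]

lemma fT_Bset (hK : K ≤ N) (n : ℕ) : fT (Bset N K) n = min K n := by
  rcases le_or_gt K n with h | h
  · rw [fT, show (Bset N K).filter (fun i : Fin N => (i : ℕ) < n) = Bset N K from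
      Finset.filter_true_of_mem (fun i hi => by rw [mem_Bset] at hi; omega),
      card_Bset hK, min_eq_left h]
  · rw [fT, show (Bset N K).filter (fun i : Fin N => (i : ℕ) < n) = Bset N n by
      ext i; simp [Bset]; omega]
    rw [card_Bset (by omega), min_eq_right (le_of_lt h)]

def Dom (T T' : Finset (Fin N)) : Prop := ∀ n : ℕ, fT T' n ≤ fT T n

lemma dom_Bset (hK : K ≤ N) {T : Finset (Fin N)} (hT : T.card = K) : Dom (Bset N K) T := by
  intro n
  rw [fT_Bset hK]
  exact le_min (hT ▸ fT_le_card T n) (fT_le_n T n)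

def Ind (K : ℕ) {N : ℕ} (T : Finset (Fin N)) (v : Equiv.Perm (Fin N)) : Prop :=
  ∀ i : Fin N, ((v⁻¹ i : Fin N) : ℕ) < K ↔ i ∈ T

def Tof (K : ℕ) {N : ℕ} (v : Equiv.Perm (Fin N)) : Finset (Fin N) :=
  univ.filter (fun i : Fin N => ((v⁻¹ i : Fin N) : ℕ) < K)

lemma ind_Tof (v : Equiv.Perm (Fin N)) : Ind K (Tof K v) v := fun i => by simp [Tof]

lemma Tof_eq {T : Finset (Fin N)} {v : Equiv.Perm (Fin N)} (hv : Ind K T v) : Tof K v = T := by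
  ext i
  rw [← hv i]
  simp [Tof]

lemma Tof_card (hK : K ≤ N) (v : Equiv.Perm (Fin N)) : (Tof K v).card = K := by
  have : Tof K v = (Bset N K).image v := by
    ext i
    simp only [Tof, Finset.mem_image, Finset.mem_filter, Finset.mem_univ, true_and]
    constructor
    · intro h
      exact ⟨v⁻¹ i, by rw [mem_Bset]; exact h, Equiv.Perm.apply_inv_self v i⟩
    · rintro ⟨b, hb, rfl⟩
      rw [mem_Bset] at hb
      rwa [Equiv.Perm.inv_apply_self]
  rw [this, Finset.card_image_of_injective _ v.injective, card_Bset hK]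

lemma ind_card (hK : K ≤ N) {T : Finset (Fin N)} {v : Equiv.Perm (Fin N)} (hv : Ind K T v) :
    T.card = K := by
  rw [← Tof_eq hv, Tof_card hK]

lemma move {T : Finset (Fin N)} {v : Equiv.Perm (Fin N)} {j : ℕ} (hj : j + 1 < N)
    (hja : pa j hj ∈ T) (hjb : pb j hj ∉ T) (hv : Ind K T v) :
    bcov N v (sgen N j hj * v) ∧
      Ind K (insert (pb j hj) (T.erase (pa j hj))) (sgen N j hj * v) := by
  have hlta : ((v⁻¹ (pa j hj) : Fin N) : ℕ) < K := (hv _).mpr hja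
  have hltb : ¬ ((v⁻¹ (pb j hj) : Fin N) : ℕ) < K := fun h => hjb ((hv _).mp h)
  have hord : v⁻¹ (pa j hj) < v⁻¹ (pb j hj) := by rw [Fin.lt_def]; omega
  have hpapb : pa j hj ≠ pb j hj := ne_of_lt (pa_lt_pb j hj)
  refine ⟨⟨⟨j, hj, Or.inl rfl⟩, len_sgen_mul_of_lt hj hord⟩, ?_⟩
  intro i
  rw [mul_inv_rev, sgen_inv, Equiv.Perm.mul_apply]
  by_cases h1 : i = pa j hj
  · subst h1
    rw [sgen_pa]
    simp only [Finset.mem_insert, Finset.mem_erase]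
    constructor
    · intro h; exact absurd h hltb
    · rintro (h | ⟨h, _⟩) <;> [exact absurd h hpapb; exact absurd rfl h]
  · by_cases h2 : i = pb j hj
    · subst h2
      rw [sgen_pb]
      exact ⟨fun _ => Finset.mem_insert_self _ _, fun _ => hlta⟩
    · rw [sgen_eq, Equiv.swap_apply_of_ne_of_ne h1 h2]
      rw [hv i]
      simp only [Finset.mem_insert, Finset.mem_erase]
      exact ⟨fun h => Or.inr ⟨h1, h⟩, fun h => by
        rcases h with h | ⟨_, h⟩
        · exact absurd h h2
        · exact h⟩

lemma fT_succ_le (T : Finset (Fin N)) (n : ℕ) : fT T (n + 1) ≤ fT T n + 1 := by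
  rcases lt_or_ge n N with h | h
  · rw [fT_succ T h]
    split_ifs <;> omega
  · rw [fT_all T (by omega), fT_all T h]
    omega

lemma exists_move {T T' : Finset (Fin N)} (hT : T.card = K) (hT' : T'.card = K)
    (hd : Dom T T') (hne : T ≠ T') :
    ∃ (j : ℕ) (hj : j + 1 < N), pa j hj ∈ T ∧ pb j hj ∉ T ∧ fT T' (j + 1) < fT T (j + 1) := by
  set S := (Finset.range (N + 1)).filter (fun n => fT T' n < fT T n) with hS
  have hSne : S.Nonempty := by
    by_contra hc
    rw [Finset.not_nonempty_iff_eq_empty] at hc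
    apply hne
    have hall : ∀ n : ℕ, fT T n = fT T' n := by
      intro n
      rcases le_or_gt n N with h | h
      · have : n ∉ S := by rw [hc]; exact Finset.notMem_empty n
        simp only [hS, Finset.mem_filter, Finset.mem_range, not_and, not_lt] at this
        exact le_antisymm (this (by omega)) (hd n)
      · rw [fT_all T (by omega), fT_all T' (by omega), hT, hT']
    ext i
    have h1 := fT_succ T i.isLt
    have h2 := fT_succ T' i.isLt
    have e1 := hall ((i : ℕ) + 1)
    have e2 := hall (i : ℕ)
    simp only [Fin.eta] at h1 h2
    constructor
    · intro hi
      by_contra hi'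
      rw [if_pos hi] at h1
      rw [if_neg hi'] at h2
      omega
    · intro hi'
      by_contra hi
      rw [if_pos hi'] at h2
      rw [if_neg hi] at h1
      omega
  obtain ⟨b, hbS, hbmax⟩ := S.exists_max_image (fT T) hSne
  obtain ⟨x0, hx0mem, hx0min⟩ :=
    (S.filter (fun n => fT T n = fT T b)).exists_min_image id
      ⟨b, Finset.mem_filter.mpr ⟨hbS, rfl⟩⟩
  rw [Finset.mem_filter] at hx0mem
  obtain ⟨hx0S, hx0M⟩ := hx0mem
  have hx0lt : fT T' x0 < fT T x0 := by
    have := Finset.mem_filter.mp hx0S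
    exact this.2
  have hx0N : x0 ≤ N := by
    have := (Finset.mem_filter.mp hx0S).1
    rw [Finset.mem_range] at this
    omega
  have hmax : ∀ n ∈ S, fT T n ≤ fT T x0 := by
    intro n hn
    rw [hx0M]
    exact hbmax n hn
  have hmin : ∀ n ∈ S, fT T n = fT T x0 → x0 ≤ n := by
    intro n hn he
    exact hx0min n (Finset.mem_filter.mpr ⟨hn, by rw [he, hx0M]⟩)
  have hx0pos : 0 < x0 := by
    rcases Nat.eq_zero_or_pos x0 with h | h
    · rw [h, fT_zero, fT_zero] at hx0lt; omega
    · exact h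
  have hx0ltN : x0 < N := by
    rcases lt_or_eq_of_le hx0N with h | h
    · exact h
    · rw [h, fT_all T (le_refl N), fT_all T' (le_refl N), hT, hT'] at hx0lt
      omega
  have hj : (x0 - 1) + 1 < N := by omega
  refine ⟨x0 - 1, hj, ?_, ?_, ?_⟩
  · by_contra hc
    have hstep := fT_succ T (show x0 - 1 < N by omega)
    have hpa : (⟨x0 - 1, by omega⟩ : Fin N) = pa (x0 - 1) hj := rfl
    rw [if_neg (hpa ▸ hc)] at hstep
    have he : fT T (x0 - 1) = fT T x0 := by
      rw [show x0 - 1 + 1 = x0 by omega] at hstep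
      omega
    have hmemS : x0 - 1 ∈ S := by
      rw [hS, Finset.mem_filter, Finset.mem_range]
      refine ⟨by omega, ?_⟩
      calc fT T' (x0 - 1) ≤ fT T' x0 := fT_mono T' (by omega)
        _ < fT T x0 := hx0lt
        _ = fT T (x0 - 1) := he.symm
    have := hmin _ hmemS (by omega)
    omega
  · intro hc
    have hstep := fT_succ T (show x0 < N from hx0ltN)
    have hpb : (⟨x0, hx0ltN⟩ : Fin N) = pb (x0 - 1) hj := by
      simp [pb, Fin.ext_iff]; omega
    rw [if_pos (hpb ▸ hc)] at hstep
    have hmemS : x0 + 1 ∈ S := by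
      rw [hS, Finset.mem_filter, Finset.mem_range]
      refine ⟨by omega, ?_⟩
      calc fT T' (x0 + 1) ≤ fT T' x0 + 1 := fT_succ_le T' x0
        _ ≤ fT T x0 := by omega
        _ < fT T (x0 + 1) := by omega
    have := hmax _ hmemS
    omega
  · rw [show x0 - 1 + 1 = x0 by omega]
    exact hx0lt

theorem chain (hK : K ≤ N) : ∀ (D : ℕ) (T T' : Finset (Fin N)), T.card = K → T'.card = K →
    Dom T T' → (∑ n ∈ Finset.range (N + 1), (fT T n - fT T' n)) = D →
    ∀ v : Equiv.Perm (Fin N), Ind K T v →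
    ∃ w, Ind K T' w ∧ Relation.ReflTransGen (bcov N) v w ∧ len w = len v + D := by
  intro D
  induction D using Nat.strong_induction_on with
  | _ D ih =>
    intro T T' hT hT' hd hsum v hv
    by_cases hTT : T = T'
    · subst hTT
      refine ⟨v, hv, Relation.ReflTransGen.refl, ?_⟩
      rw [← hsum]
      simp
    · obtain ⟨j, hj, hja, hjb, hstrict⟩ := exists_move hT hT' hd hTT
      obtain ⟨hb1, hv1⟩ := move hj hja hjb hv
      set T1 := insert (pb j hj) (T.erase (pa j hj)) with hT1
      have hcard1 : T1.card = K := by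
        rw [hT1, Finset.card_insert_of_notMem (fun hc => hjb (Finset.mem_of_mem_erase hc)),
          Finset.card_erase_of_mem hja, hT]
        have : 0 < K := hT ▸ Finset.card_pos.mpr ⟨_, hja⟩
        omega
      have hfT1 : ∀ n, fT T1 n + (if j < n then 1 else 0) = fT T n + (if j + 1 < n then 1 else 0) :=
        fun n => fT_update hja hjb n
      have hd1 : Dom T1 T' := by
        intro n
        have e := hfT1 n
        by_cases hn : n = j + 1
        · subst hn
          rw [if_pos (by omega), if_neg (by omega)] at e
          omega
        · have := hd n
          split_ifs at e <;> omega
      have hjrange : j + 1 ∈ Finset.range (N + 1) := Finset.mem_range.mpr (by omega)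
      have hsplit := Finset.sum_erase_add (Finset.range (N + 1))
        (fun n => fT T n - fT T' n) hjrange
      have hsplit1 := Finset.sum_erase_add (Finset.range (N + 1))
        (fun n => fT T1 n - fT T' n) hjrange
      beta_reduce at hsplit hsplit1
      have hagree : ∑ n ∈ (Finset.range (N + 1)).erase (j + 1), (fT T1 n - fT T' n) =
          ∑ n ∈ (Finset.range (N + 1)).erase (j + 1), (fT T n - fT T' n) := by
        apply Finset.sum_congr rfl
        intro n hn
        have hne' : n ≠ j + 1 := Finset.ne_of_mem_erase hn
        have e := hfT1 n
        split_ifs at e <;> omega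
      have hval1 : fT T1 (j + 1) = fT T (j + 1) - 1 ∧ 1 ≤ fT T (j + 1) := by
        have e := hfT1 (j + 1)
        rw [if_pos (by omega), if_neg (by omega)] at e
        omega
      have hDpos : 1 ≤ D := by
        rw [← hsum, ← hsplit]
        have := hd (j + 1)
        omega
      have hsum1 : (∑ n ∈ Finset.range (N + 1), (fT T1 n - fT T' n)) = D - 1 := by
        rw [← hsplit1, hagree]
        rw [← hsplit] at hsum
        have := hd (j + 1)
        omega
      obtain ⟨w, hw, hrtg, hlen⟩ := ih (D - 1) (by omega) T1 T' hcard1 hT' hd1 hsum1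
        (sgen N j hj * v) hv1
      refine ⟨w, hw, Relation.ReflTransGen.head hb1 hrtg, ?_⟩
      rw [hlen, hb1.2]
      omega

def cross (T : Finset (Fin N)) : ℕ :=
  ((univ : Finset (Fin N × Fin N)).filter (fun p => p.1 < p.2 ∧ p.1 ∉ T ∧ p.2 ∈ T)).card

lemma len_ge_cross {T : Finset (Fin N)} {v : Equiv.Perm (Fin N)} (hv : Ind K T v) :
    cross T ≤ len v := by
  rw [← len_inv v]
  unfold len cross
  apply Finset.card_le_card
  intro p hp
  simp only [Finset.mem_filter, Finset.mem_univ, true_and] at hp ⊢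
  refine ⟨hp.1, ?_⟩
  have h1 : ¬ ((v⁻¹ p.1 : Fin N) : ℕ) < K := fun h => hp.2.1 ((hv p.1).mp h)
  have h2 : ((v⁻¹ p.2 : Fin N) : ℕ) < K := (hv p.2).mpr hp.2.2
  rw [Fin.lt_def]
  omega

lemma exists21 {T : Finset (Fin N)} (hK : K ≤ N) (hT : T.card = K) (hne : T ≠ Bset N K) :
    ∃ (j : ℕ) (hj : j + 1 < N), pa j hj ∉ T ∧ pb j hj ∈ T := by
  by_contra hc
  push_neg at hc
  apply hne
  have step : ∀ (j : ℕ) (hj : j + 1 < N), pb j hj ∈ T → pa j hj ∈ T := by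
    intro j hj hb
    by_contra ha
    exact absurd hb (hc j hj ha)
  have hdown : ∀ (d : ℕ) (i : Fin N), i ∈ T → ∀ (m : ℕ) (hm : m < N), m + d = (i : ℕ) →
      (⟨m, hm⟩ : Fin N) ∈ T := by
    intro d
    induction d with
    | zero =>
      intro i hi m hm he
      have : (⟨m, hm⟩ : Fin N) = i := by
        rw [Fin.ext_iff]
        simp only [Fin.val_mk]
        omega
      rwa [this]
    | succ d ihd =>
      intro i hi m hm he
      have hm1 : m + 1 < N := by omega
      have h1 : (⟨m + 1, hm1⟩ : Fin N) ∈ T := ihd i hi (m + 1) hm1 (by omega)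
      exact step m hm1 h1
  ext i
  rw [mem_Bset]
  constructor
  · intro hi
    have hsub : Bset N ((i : ℕ) + 1) ⊆ T := by
      intro b hb
      rw [mem_Bset] at hb
      have : (⟨(b : ℕ), b.isLt⟩ : Fin N) ∈ T :=
        hdown ((i : ℕ) - (b : ℕ)) i hi (b : ℕ) b.isLt (by omega)
      simpa using this
    have := Finset.card_le_card hsub
    rw [card_Bset (by omega), hT] at this
    omega
  · intro hi
    by_contra hiT
    have hsub : T ⊆ Bset N (i : ℕ) := by
      intro t ht
      rw [mem_Bset]
      by_contra hlt
      push_neg at hlt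
      have : i ∈ T := by
        have := hdown ((t : ℕ) - (i : ℕ)) t ht (i : ℕ) i.isLt (by omega)
        simpa using this
      exact hiT this
    have := Finset.card_le_card hsub
    rw [card_Bset (by omega), hT] at this
    omega

lemma mem_T2 {T : Finset (Fin N)} {j : ℕ} {hj : j + 1 < N}
    (ha : pa j hj ∉ T) (hb : pb j hj ∈ T) (x : Fin N) :
    x ∈ insert (pa j hj) (T.erase (pb j hj)) ↔ sgen N j hj x ∈ T := by
  have hab : pa j hj ≠ pb j hj := ne_of_lt (pa_lt_pb j hj)
  by_cases h1 : x = pa j hj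
  · subst h1
    rw [sgen_pa]
    simp [hb]
  · by_cases h2 : x = pb j hj
    · subst h2
      rw [sgen_pb]
      simp only [Finset.mem_insert, Finset.mem_erase]
      constructor
      · rintro (h | ⟨h, _⟩)
        · exact absurd h.symm hab
        · exact absurd rfl h
      · intro h
        exact absurd h ha
    · rw [sgen_eq, Equiv.swap_apply_of_ne_of_ne h1 h2]
      simp only [Finset.mem_insert, Finset.mem_erase]
      constructor
      · rintro (h | ⟨_, h⟩)
        · exact absurd h h1
        · exact h
      · intro h
        exact Or.inr ⟨h2, h⟩

lemma cross_step {T : Finset (Fin N)} {j : ℕ} (hj : j + 1 < N)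
    (ha : pa j hj ∉ T) (hb : pb j hj ∈ T) :
    cross T = cross (insert (pa j hj) (T.erase (pb j hj))) + 1 := by
  set T2 := insert (pa j hj) (T.erase (pb j hj)) with hT2
  unfold cross
  apply card_swap_succ hj
  · intro p hp; exact (Finset.mem_filter.mp hp).2.1
  · intro p hp; exact (Finset.mem_filter.mp hp).2.1
  · intro p hord hne
    simp only [Finset.mem_filter, Finset.mem_univ, true_and]
    have e1 : sgen N j hj p.1 ∈ T2 ↔ p.1 ∈ T := by
      rw [mem_T2 ha hb, ← Equiv.Perm.mul_apply, sgen_sq, Equiv.Perm.one_apply]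
    have e2 : sgen N j hj p.2 ∈ T2 ↔ p.2 ∈ T := by
      rw [mem_T2 ha hb, ← Equiv.Perm.mul_apply, sgen_sq, Equiv.Perm.one_apply]
    constructor
    · intro h
      exact ⟨sgen_lt hj hord hne, fun hc => h.2.1 (e1.mp hc), e2.mpr h.2.2⟩
    · intro h
      exact ⟨hord, fun hc => h.2.1 (e1.mpr hc), e2.mp h.2.2⟩
  · simp only [Finset.mem_filter, Finset.mem_univ, true_and]
    exact ⟨pa_lt_pb j hj, ha, hb⟩
  · simp only [Finset.mem_filter, Finset.mem_univ, true_and, hT2, not_and]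
    intro _ h
    exact absurd (Finset.mem_insert_self _ _) h

lemma cross_eq_D (hK : K ≤ N) : ∀ (Dv : ℕ) (T : Finset (Fin N)), T.card = K →
    (∑ n ∈ Finset.range (N + 1), (fT (Bset N K) n - fT T n)) = Dv → cross T = Dv := by
  intro Dv
  induction Dv using Nat.strong_induction_on with
  | _ Dv ih =>
    intro T hT hsum
    by_cases hTB : T = Bset N K
    · subst hTB
      have h0 : Dv = 0 := by
        rw [← hsum]
        simp
      rw [h0]
      unfold cross
      rw [Finset.card_eq_zero, Finset.filter_eq_empty_iff]
      intro p _
      rw [mem_Bset, mem_Bset, Fin.lt_def]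
      intro ⟨h1, h2, h3⟩
      omega
    · obtain ⟨j, hj, ha, hb⟩ := exists21 hK hT hTB
      set T2 := insert (pa j hj) (T.erase (pb j hj)) with hT2
      have hcard2 : T2.card = K := by
        rw [hT2, Finset.card_insert_of_notMem (fun hc => ha (Finset.mem_of_mem_erase hc)),
          Finset.card_erase_of_mem hb, hT]
        have : 0 < K := hT ▸ Finset.card_pos.mpr ⟨_, hb⟩
        omega
      have hfT2 : ∀ n, fT T2 n + (if j + 1 < n then 1 else 0) =
          fT T n + (if j < n then 1 else 0) := fun n => fT_update hb ha n
      have hdom := dom_Bset hK hT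
      have hdom2 := dom_Bset hK hcard2
      have hjrange : j + 1 ∈ Finset.range (N + 1) := Finset.mem_range.mpr (by omega)
      have hsplit := Finset.sum_erase_add (Finset.range (N + 1))
        (fun n => fT (Bset N K) n - fT T n) hjrange
      have hsplit2 := Finset.sum_erase_add (Finset.range (N + 1))
        (fun n => fT (Bset N K) n - fT T2 n) hjrange
      beta_reduce at hsplit hsplit2
      have hagree : ∑ n ∈ (Finset.range (N + 1)).erase (j + 1), (fT (Bset N K) n - fT T2 n) =
          ∑ n ∈ (Finset.range (N + 1)).erase (j + 1), (fT (Bset N K) n - fT T n) := by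
        apply Finset.sum_congr rfl
        intro n hn
        have hne' : n ≠ j + 1 := Finset.ne_of_mem_erase hn
        have e := hfT2 n
        split_ifs at e <;> omega
      have hval2 : fT T2 (j + 1) = fT T (j + 1) + 1 := by
        have e := hfT2 (j + 1)
        rw [if_neg (by omega), if_pos (by omega)] at e
        omega
      have hDpos : 1 ≤ Dv := by
        rw [← hsum, ← hsplit]
        have h1 := hdom2 (j + 1)
        omega
      have hsum2 : (∑ n ∈ Finset.range (N + 1), (fT (Bset N K) n - fT T2 n)) = Dv - 1 := by
        rw [← hsplit2, hagree]
        rw [← hsplit] at hsum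
        have h1 := hdom2 (j + 1)
        have h2 := hdom (j + 1)
        omega
      have := ih (Dv - 1) (by omega) T2 hcard2 hsum2
      rw [cross_step hj ha hb, ← hT2, this]
      omega

lemma mem_Tof {v : Equiv.Perm (Fin N)} {i : Fin N} :
    i ∈ Tof K v ↔ ((v⁻¹ i : Fin N) : ℕ) < K := by simp [Tof]

lemma dom_refl (T : Finset (Fin N)) : Dom T T := fun _ => le_refl _

lemma dom_insert {T : Finset (Fin N)} {a b : Fin N} (ha : a ∈ T) (hb : b ∉ T)
    (hlt : (a : ℕ) < (b : ℕ)) : Dom T (insert b (T.erase a)) := by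
  intro n
  have e := fT_update ha hb n
  split_ifs at e <;> omega

lemma bcov_dom {v w : Equiv.Perm (Fin N)} (h : bcov N v w) : Dom (Tof K v) (Tof K w) := by
  obtain ⟨⟨j, hj, hor⟩, hlen⟩ := h
  rcases hor with rfl | rfl
  · -- left multiplication
    by_cases hA : ((v⁻¹ (pa j hj) : Fin N) : ℕ) < K <;>
      by_cases hB : ((v⁻¹ (pb j hj) : Fin N) : ℕ) < K
    · -- both: string unchanged
      have : Tof K (sgen N j hj * v) = Tof K v := by
        ext i
        rw [mem_Tof, mem_Tof, mul_inv_rev, sgen_inv, Equiv.Perm.mul_apply]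
        by_cases h1 : i = pa j hj
        · subst h1; rw [sgen_pa]; simp only [hA, hB]
        · by_cases h2 : i = pb j hj
          · subst h2; rw [sgen_pb]; simp only [hA, hB]
          · rw [sgen_eq, Equiv.swap_apply_of_ne_of_ne h1 h2]
      rw [this]
      exact dom_refl _
    · -- (1,2) pattern : path goes up
      have hind := (move hj (mem_Tof.mpr hA) (fun hc => hB (mem_Tof.mp hc)) (ind_Tof v)).2
      rw [Tof_eq hind]
      exact dom_insert (mem_Tof.mpr hA) (fun hc => hB (mem_Tof.mp hc)) (by simp [pa, pb])
    · -- (2,1) pattern : contradiction with length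
      exfalso
      have hord : v⁻¹ (pb j hj) < v⁻¹ (pa j hj) := by rw [Fin.lt_def]; omega
      have := len_of_sgen_mul_lt hj hord
      omega
    · -- neither
      have : Tof K (sgen N j hj * v) = Tof K v := by
        ext i
        rw [mem_Tof, mem_Tof, mul_inv_rev, sgen_inv, Equiv.Perm.mul_apply]
        by_cases h1 : i = pa j hj
        · subst h1; rw [sgen_pa]; simp only [hA, hB]
        · by_cases h2 : i = pb j hj
          · subst h2; rw [sgen_pb]; simp only [hA, hB]
          · rw [sgen_eq, Equiv.swap_apply_of_ne_of_ne h1 h2]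
      rw [this]
      exact dom_refl _
  · -- right multiplication
    by_cases hK1 : j + 1 = K
    · -- the cut position
      set p := v (pa j hj) with hp
      set q := v (pb j hj) with hq
      have hpq : p ≠ q := fun h => absurd (v.injective h) (ne_of_lt (pa_lt_pb j hj))
      have hpT : p ∈ Tof K v := by
        rw [mem_Tof, hp, Equiv.Perm.inv_apply_self]
        simp [pa]; omega
      have hqT : q ∉ Tof K v := by
        rw [mem_Tof, hq, Equiv.Perm.inv_apply_self]
        simp [pb]; omega
      have hTw : Tof K (v * sgen N j hj) = insert q ((Tof K v).erase p) := by
        ext i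
        rw [mem_Tof, mul_inv_rev, sgen_inv, Equiv.Perm.mul_apply]
        by_cases h1 : i = p
        · subst h1
          rw [hp, Equiv.Perm.inv_apply_self, sgen_pa]
          simp only [Finset.mem_insert, Finset.mem_erase, pb]
          constructor
          · intro hcc; omega
          · rintro (hcc | ⟨hcc, _⟩)
            · exact absurd hcc hpq
            · exact absurd rfl hcc
        · by_cases h2 : i = q
          · subst h2
            rw [hq, Equiv.Perm.inv_apply_self, sgen_pb]
            constructor
            · intro _; exact Finset.mem_insert_self _ _
            · intro _; simp only [pa]; omega
          · have hna : v⁻¹ i ≠ pa j hj := fun hc => h1 (by rw [hp, ← hc, Equiv.Perm.apply_inv_self])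
            have hnb : v⁻¹ i ≠ pb j hj := fun hc => h2 (by rw [hq, ← hc, Equiv.Perm.apply_inv_self])
            rw [sgen_eq, Equiv.swap_apply_of_ne_of_ne hna hnb]
            simp only [Finset.mem_insert, Finset.mem_erase]
            rw [← mem_Tof]
            constructor
            · intro hcc; exact Or.inr ⟨h1, hcc⟩
            · rintro (hcc | ⟨_, hcc⟩)
              · exact absurd hcc h2
              · exact hcc
      rcases lt_or_gt_of_ne hpq with hlt | hgt
      · rw [hTw]
        exact dom_insert hpT hqT hlt
      · exfalso
        have hord : v (pb j hj) < v (pa j hj) := hgt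
        have := len_of_sgen_lt hj hord
        omega
    · -- away from the cut : string unchanged
      have : Tof K (v * sgen N j hj) = Tof K v := by
        ext i
        rw [mem_Tof, mem_Tof, mul_inv_rev, sgen_inv, Equiv.Perm.mul_apply]
        exact sgen_pres hj hK1 (v⁻¹ i)
      rw [this]
      exact dom_refl _

lemma rtg_dom {v w : Equiv.Perm (Fin N)} (h : Relation.ReflTransGen (bcov N) v w) :
    Dom (Tof K v) (Tof K w) := by
  induction h with
  | refl => exact dom_refl _
  | tail _ hstep ih => exact fun n => le_trans (bcov_dom hstep n) (ih n)

def hgT (T : Finset (Fin N)) (x : ℤ) : ℤ := hgtm (fun i => decide (i ∈ T)) x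

lemma hgtm_eq_of_ind {T : Finset (Fin N)} {v : Equiv.Perm (Fin N)} (hv : Ind K T v) (x : ℤ) :
    hgtm (fun i => base N K (v⁻¹ i)) x = hgT T x := by
  unfold hgtm hgT hgtm
  apply Finset.sum_congr rfl
  intro i _
  have : (base N K (v⁻¹ i)) = decide (i ∈ T) := by
    unfold base
    exact decide_eq_decide.mpr (hv i)
  simp only [this]

lemma hgtm_base (x : ℤ) : hgtm (base N K) x = hgT (Bset N K) x := by
  unfold hgtm hgT hgtm
  apply Finset.sum_congr rfl
  intro i _
  have : (base N K i) = decide (i ∈ Bset N K) := by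
    unfold base
    exact decide_eq_decide.mpr (mem_Bset i).symm
  simp only [this]

lemma hgT_card (T : Finset (Fin N)) (x : ℤ) :
    hgT T x = ((univ.filter (fun i : Fin N => (i : ℤ) < x)).card : ℤ) -
      2 * (fT T x.toNat : ℤ) := by
  unfold hgT hgtm fT
  have hfe : T.filter (fun i : Fin N => (i : ℕ) < x.toNat) =
      (univ.filter (fun i : Fin N => (i : ℤ) < x)).filter (fun i => i ∈ T) := by
    ext i
    simp only [Finset.mem_filter, Finset.mem_univ, true_and]
    constructor
    · rintro ⟨h1, h2⟩; exact ⟨by omega, h1⟩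
    · rintro ⟨h1, h2⟩; exact ⟨h2, by omega⟩
  rw [hfe]
  have key : ∀ i ∈ univ.filter (fun i : Fin N => (i : ℤ) < x),
      (if (decide (i ∈ T)) then (-1 : ℤ) else 1) =
        1 - 2 * (if i ∈ T then (1 : ℤ) else 0) := by
    intro i _
    by_cases h : i ∈ T <;> simp [h]
  rw [Finset.sum_congr rfl key, Finset.sum_sub_distrib, Finset.sum_const, ← Finset.mul_sum,
    Finset.sum_boole]
  simp [mul_comm]

lemma hgT_le_iff (T T' : Finset (Fin N)) :
    (∀ x : ℤ, hgT T x ≤ hgT T' x) ↔ Dom T T' := by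
  constructor
  · intro h n
    have := h (n : ℤ)
    rw [hgT_card, hgT_card, Int.toNat_natCast] at this
    omega
  · intro h x
    rw [hgT_card, hgT_card]
    have := h x.toNat
    omega

lemma clen_eq (hK : K ≤ N) (v : Equiv.Perm (Fin N)) :
    clen N K (QuotientGroup.mk v) =
      ∑ n ∈ Finset.range (N + 1), (fT (Bset N K) n - fT (Tof K v) n) := by
  set T := Tof K v with hT
  set Dv := ∑ n ∈ Finset.range (N + 1), (fT (Bset N K) n - fT T n) with hDv
  have hTc : T.card = K := Tof_card hK v
  obtain ⟨w, hw, hrtg, hlenw⟩ := chain hK Dv (Bset N K) T (card_Bset hK) hTc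
    (dom_Bset hK hTc) rfl 1 (fun i => by simp [mem_Bset])
  rw [len_one] at hlenw
  have hmkw : (QuotientGroup.mk w : _ ⧸ young N K) = QuotientGroup.mk v := by
    rw [claimA]
    intro i
    rw [hw i, hT, mem_Tof]
  unfold clen
  apply le_antisymm
  · exact Nat.sInf_le ⟨w, hmkw, by omega⟩
  · have hne : {n | ∃ v' : Equiv.Perm (Fin N),
        (QuotientGroup.mk v' : _ ⧸ young N K) = QuotientGroup.mk v ∧ len v' = n}.Nonempty :=
      ⟨len w, ⟨w, hmkw, rfl⟩⟩
    apply le_csInf hne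
    rintro n ⟨v', hv', rfl⟩
    have hind : Ind K T v' := by
      intro i
      rw [hT, mem_Tof]
      exact ((claimA v' v).mp hv' i)
    calc Dv = cross T := (cross_eq_D hK Dv T hTc rfl).symm
      _ ≤ len v' := len_ge_cross hind

end Stmt5


/-- for cosets `x = mk v`, `y = mk w` of `S_K × S_{N-K}` with associated
paths (ε = − convention) `α`, `β`, one has `x ≤ y` in the induced Bruhat order iff `α`
lies weakly below `β`; moreover twice the coset length `|x|` equals the total height
difference between `α` and the minimal path (i.e. `|x|` is the number of unit boxes
between `α` and the minimal path, which is the path of the string `(1,…,1,2,…,2)`). -/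
theorem stmt5 (N K : ℕ) (hK : K ≤ N) (v w : Equiv.Perm (Fin N)) :
    (cosetLE N K (QuotientGroup.mk v) (QuotientGroup.mk w) ↔
      ∀ x : ℤ, hgtm (fun i => base N K (v⁻¹ i)) x ≤ hgtm (fun i => base N K (w⁻¹ i)) x) ∧
    2 * (clen N K (QuotientGroup.mk v) : ℤ) =
      ∑ x ∈ Finset.range (N + 1),
        (hgtm (fun i => base N K (v⁻¹ i)) (x : ℤ) - hgtm (base N K) (x : ℤ)) := by
  constructor
  · constructor
    · intro hc
      obtain ⟨v', w', hv', hw', hrtg⟩ := hc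
      intro x
      have h1 : Stmt5.Tof K v' = Stmt5.Tof K v := by
        ext i
        rw [Stmt5.mem_Tof, Stmt5.mem_Tof]
        exact (Stmt5.claimA v' v).mp hv' i
      have h2 : Stmt5.Tof K w' = Stmt5.Tof K w := by
        ext i
        rw [Stmt5.mem_Tof, Stmt5.mem_Tof]
        exact (Stmt5.claimA w' w).mp hw' i
      have hdom := Stmt5.rtg_dom (K := K) hrtg
      rw [h1, h2] at hdom
      rw [Stmt5.hgtm_eq_of_ind (Stmt5.ind_Tof v) x, Stmt5.hgtm_eq_of_ind (Stmt5.ind_Tof w) x]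
      exact (Stmt5.hgT_le_iff _ _).mpr hdom x
    · intro h
      have hdom : Stmt5.Dom (Stmt5.Tof K v) (Stmt5.Tof K w) := by
        apply (Stmt5.hgT_le_iff _ _).mp
        intro x
        rw [← Stmt5.hgtm_eq_of_ind (Stmt5.ind_Tof v) x, ← Stmt5.hgtm_eq_of_ind (Stmt5.ind_Tof w) x]
        exact h x
      obtain ⟨w', hw', hrtg, -⟩ := Stmt5.chain hK
        (∑ n ∈ Finset.range (N + 1), (Stmt5.fT (Stmt5.Tof K v) n - Stmt5.fT (Stmt5.Tof K w) n))
        (Stmt5.Tof K v) (Stmt5.Tof K w) (Stmt5.Tof_card hK v) (Stmt5.Tof_card hK w) hdom rfl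
        v (Stmt5.ind_Tof v)
      refine ⟨v, w', rfl, ?_, hrtg⟩
      rw [Stmt5.claimA]
      intro i
      rw [hw' i, Stmt5.mem_Tof]
  · rw [Stmt5.clen_eq hK v]
    have hcongr : ∀ n ∈ Finset.range (N + 1),
        hgtm (fun i => base N K (v⁻¹ i)) ((n : ℕ) : ℤ) - hgtm (base N K) ((n : ℕ) : ℤ) =
          2 * ((Stmt5.fT (Stmt5.Bset N K) n : ℤ) - (Stmt5.fT (Stmt5.Tof K v) n : ℤ)) := by
      intro n _
      rw [Stmt5.hgtm_eq_of_ind (Stmt5.ind_Tof v), Stmt5.hgtm_base, Stmt5.hgT_card,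
        Stmt5.hgT_card, Int.toNat_natCast]
      ring
    rw [Finset.sum_congr rfl hcongr]
    have hcast : ((∑ n ∈ Finset.range (N + 1),
        (Stmt5.fT (Stmt5.Bset N K) n - Stmt5.fT (Stmt5.Tof K v) n) : ℕ) : ℤ) =
        ∑ n ∈ Finset.range (N + 1),
          ((Stmt5.fT (Stmt5.Bset N K) n : ℤ) - (Stmt5.fT (Stmt5.Tof K v) n : ℤ)) := by
      rw [Nat.cast_sum]
      apply Finset.sum_congr rfl
      intro n _
      rw [Nat.cast_sub (Stmt5.dom_Bset hK (Stmt5.Tof_card hK v) n)]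
    rw [hcast, Finset.mul_sum]
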